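/- Let K > 0, C, A, B, a₁ ≠ 0, a₂, μ > 0 be real constants with A and B not both zero, set ε* := 2π e^C/(A² + B²), and let Φ : ℝ → ℝ be a twice continuously differentiable function satisfying Φ''(s) = ε* e^{-Φ(s)/K} for all s. Define a(t) := a₁ + a₂ t, ρ(t,x,y) := (1/a(t)²) e^{-Φ((Ax+By)/a(t))/K + C}, u(t,x,y) := (a'(t)/a(t))·(x,y), and φ(t,x,y) := Φ((Ax+By)/a(t)). Then at every point (t,x,y) with a(t) ≠ 0, these functions satisfy the 2-dimensional isothermal Navier–Stokes–Poisson equations: ∂ρ/∂t + ∇·(ρu) = 0, ρ(∂u/∂t + (u·∇)u) + K∇ρ = -ρ∇φ + μΔu, and Δφ = 2πρ, where ∇ and Δ act on the spatial variables (x,y). -/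

import Mathlib

set_option maxHeartbeats 1000000


/-- The separable ansatz also solves the 2-dimensional
isothermal Navier–Stokes–Poisson equations with viscosity `μ > 0`:
continuity, both momentum components with the extra viscous term `μΔuᵢ`,
and the Poisson equation, wherever `a(t) ≠ 0`. -/
theorem navier_stokes_poisson_separable_solution
    (K C A B a₁ a₂ μ : ℝ) (hK : 0 < K) (ha₁ : a₁ ≠ 0) (hμ : 0 < μ)
    (hAB : ¬(A = 0 ∧ B = 0))
    (ε : ℝ) (hε : ε = 2 * Real.pi * Real.exp C / (A ^ 2 + B ^ 2))
    (Φ : ℝ → ℝ) (hΦ : ContDiff ℝ 2 Φ)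
    (hODE : ∀ s : ℝ, deriv (deriv Φ) s = ε * Real.exp (-Φ s / K))
    (a : ℝ → ℝ) (ha : a = fun t => a₁ + a₂ * t)
    (ρ : ℝ → ℝ → ℝ → ℝ)
    (hρ : ρ = fun t x y =>
      (1 / (a t) ^ 2) * Real.exp (-Φ ((A * x + B * y) / a t) / K + C))
    (u₁ u₂ : ℝ → ℝ → ℝ → ℝ)
    (hu₁ : u₁ = fun t x y => (deriv a t / a t) * x)
    (hu₂ : u₂ = fun t x y => (deriv a t / a t) * y)
    (φ : ℝ → ℝ → ℝ → ℝ)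
    (hφ : φ = fun t x y => Φ ((A * x + B * y) / a t)) :
    ∀ t x y : ℝ, a t ≠ 0 →
      -- continuity equation
      (deriv (fun t' => ρ t' x y) t
        + deriv (fun x' => ρ t x' y * u₁ t x' y) x
        + deriv (fun y' => ρ t x y' * u₂ t x y') y = 0)
      ∧
      -- x-momentum equation with viscosity
      (ρ t x y * (deriv (fun t' => u₁ t' x y) t
          + u₁ t x y * deriv (fun x' => u₁ t x' y) x
          + u₂ t x y * deriv (fun y' => u₁ t x y') y)
        + K * deriv (fun x' => ρ t x' y) x
        = -(ρ t x y * deriv (fun x' => φ t x' y) x)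
          + μ * (deriv (fun x' => deriv (fun x'' => u₁ t x'' y) x') x
              + deriv (fun y' => deriv (fun y'' => u₁ t x y'') y') y))
      ∧
      -- y-momentum equation with viscosity
      (ρ t x y * (deriv (fun t' => u₂ t' x y) t
          + u₁ t x y * deriv (fun x' => u₂ t x' y) x
          + u₂ t x y * deriv (fun y' => u₂ t x y') y)
        + K * deriv (fun y' => ρ t x y') y
        = -(ρ t x y * deriv (fun y' => φ t x y') y)
          + μ * (deriv (fun x' => deriv (fun x'' => u₂ t x'' y) x') x
              + deriv (fun y' => deriv (fun y'' => u₂ t x y'') y') y))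
      ∧
      -- Poisson equation
      (deriv (fun x' => deriv (fun x'' => φ t x'' y) x') x
        + deriv (fun y' => deriv (fun y'' => φ t x y'') y') y
        = 2 * Real.pi * ρ t x y) := by
  subst hε hρ hu₁ hu₂ hφ
  have hat' : ∀ τ, HasDerivAt a a₂ τ := by
    intro τ; rw [ha]; simpa using ((hasDerivAt_id τ).const_mul a₂).const_add a₁
  have hda : deriv a = fun _ => a₂ := funext fun τ => (hat' τ).deriv
  have hΦd : Differentiable ℝ Φ := hΦ.differentiable (by norm_num)
  have hΦ'd : Differentiable ℝ (deriv Φ) := by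
    have h2 : ContDiff ℝ ((1:ℕ∞)+1) Φ := by norm_num at hΦ ⊢; exact hΦ
    exact ((contDiff_succ_iff_deriv.mp h2).2.2).differentiable (by norm_num)
  have hAB2 : A ^ 2 + B ^ 2 ≠ 0 := by
    intro h; exact hAB ⟨by nlinarith [sq_nonneg A, sq_nonneg B],
      by nlinarith [sq_nonneg A, sq_nonneg B]⟩
  intro t x y hat
  simp only [hda]
  -- abbreviations
  set s : ℝ := (A * x + B * y) / a t with hs
  -- spatial derivative helpers
  have hsx : ∀ x', HasDerivAt (fun x'' => (A * x'' + B * y) / a t) (A / a t) x' := by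
    intro x'
    simpa using (((hasDerivAt_id x').const_mul A).add_const (B * y)).div_const (a t)
  have hsy : ∀ y', HasDerivAt (fun y'' => (A * x + B * y'') / a t) (B / a t) y' := by
    intro y'
    simpa using (((hasDerivAt_id y').const_mul B).const_add (A * x)).div_const (a t)
  have hΦx : ∀ x', HasDerivAt (fun x'' => Φ ((A * x'' + B * y) / a t))
      (deriv Φ ((A * x' + B * y) / a t) * (A / a t)) x' :=
    fun x' => (hΦd _).hasDerivAt.comp x' (hsx x')
  have hΦy : ∀ y', HasDerivAt (fun y'' => Φ ((A * x + B * y'') / a t))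
      (deriv Φ ((A * x + B * y') / a t) * (B / a t)) y' :=
    fun y' => (hΦd _).hasDerivAt.comp y' (hsy y')
  have hEx : HasDerivAt (fun x' => Real.exp (-Φ ((A * x' + B * y) / a t) / K + C))
      (Real.exp (-Φ s / K + C) * (-(deriv Φ s * (A / a t)) / K)) x :=
    (((hΦx x).neg.div_const K).add_const C).exp
  have hEy : HasDerivAt (fun y' => Real.exp (-Φ ((A * x + B * y') / a t) / K + C))
      (Real.exp (-Φ s / K + C) * (-(deriv Φ s * (B / a t)) / K)) y :=
    (((hΦy y).neg.div_const K).add_const C).exp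
  have hρx : HasDerivAt (fun x' => (1 / (a t) ^ 2) *
      Real.exp (-Φ ((A * x' + B * y) / a t) / K + C))
      ((1 / (a t) ^ 2) * (Real.exp (-Φ s / K + C) * (-(deriv Φ s * (A / a t)) / K))) x :=
    hEx.const_mul _
  have hρy : HasDerivAt (fun y' => (1 / (a t) ^ 2) *
      Real.exp (-Φ ((A * x + B * y') / a t) / K + C))
      ((1 / (a t) ^ 2) * (Real.exp (-Φ s / K + C) * (-(deriv Φ s * (B / a t)) / K))) y :=
    hEy.const_mul _
  -- time derivative helpers
  have hinv : HasDerivAt (fun t' => 1 / (a t') ^ 2)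
      (-((2:ℕ) * a t ^ 1 * a₂) / ((a t) ^ 2) ^ 2) t := by
    have h := ((hat' t).pow 2).inv (pow_ne_zero 2 hat)
    rw [show (fun t' => 1 / (a t') ^ 2) = (a ^ 2)⁻¹ from by funext t'; simp [one_div]]
    exact h.congr_deriv (by simp [Pi.pow_apply])
  have hst : HasDerivAt (fun t' => (A * x + B * y) / a t')
      ((0 * a t - (A * x + B * y) * a₂) / (a t) ^ 2) t :=
    (hasDerivAt_const t _).div (hat' t) hat
  have hEt : HasDerivAt (fun t' => Real.exp (-Φ ((A * x + B * y) / a t') / K + C))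
      (Real.exp (-Φ s / K + C) *
        (-(deriv Φ s * ((0 * a t - (A * x + B * y) * a₂) / (a t) ^ 2)) / K)) t :=
    ((((hΦd _).hasDerivAt.comp t hst).neg.div_const K).add_const C).exp
  have hρt : HasDerivAt (fun t' => (1 / (a t') ^ 2) *
      Real.exp (-Φ ((A * x + B * y) / a t') / K + C))
      ((-((2:ℕ) * a t ^ 1 * a₂) / ((a t) ^ 2) ^ 2) * Real.exp (-Φ s / K + C)
        + (1 / (a t) ^ 2) * (Real.exp (-Φ s / K + C) *
          (-(deriv Φ s * ((0 * a t - (A * x + B * y) * a₂) / (a t) ^ 2)) / K))) t :=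
    hinv.mul hEt
  -- velocity derivatives
  have hu1t : HasDerivAt (fun t' => a₂ / a t' * x)
      ((0 * a t - a₂ * a₂) / (a t) ^ 2 * x) t :=
    (((hasDerivAt_const t a₂).div (hat' t) hat)).mul_const x
  have hu2t : HasDerivAt (fun t' => a₂ / a t' * y)
      ((0 * a t - a₂ * a₂) / (a t) ^ 2 * y) t :=
    (((hasDerivAt_const t a₂).div (hat' t) hat)).mul_const y
  have hu1x : ∀ x', HasDerivAt (fun x'' => a₂ / a t * x'') (a₂ / a t) x' := by
    intro x'; simpa using (hasDerivAt_id x').const_mul (a₂ / a t)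
  -- products for continuity
  have hρu1x : HasDerivAt (fun x' => ((1 / (a t) ^ 2) *
      Real.exp (-Φ ((A * x' + B * y) / a t) / K + C)) * (a₂ / a t * x'))
      ((1 / (a t) ^ 2) * (Real.exp (-Φ s / K + C) * (-(deriv Φ s * (A / a t)) / K))
        * (a₂ / a t * x)
        + ((1 / (a t) ^ 2) * Real.exp (-Φ s / K + C)) * (a₂ / a t)) x :=
    hρx.mul (hu1x x)
  have hρu2y : HasDerivAt (fun y' => ((1 / (a t) ^ 2) *
      Real.exp (-Φ ((A * x + B * y') / a t) / K + C)) * (a₂ / a t * y'))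
      ((1 / (a t) ^ 2) * (Real.exp (-Φ s / K + C) * (-(deriv Φ s * (B / a t)) / K))
        * (a₂ / a t * y)
        + ((1 / (a t) ^ 2) * Real.exp (-Φ s / K + C)) * (a₂ / a t)) y := by
    have := hρy.mul ((hasDerivAt_id y).const_mul (a₂ / a t))
    exact this.congr_deriv (by simp only [id, ← hs]; ring)
  -- second derivatives of velocity vanish
  have hu1xx : deriv (fun x' => deriv (fun x'' => a₂ / a t * x'') x') x = 0 := by
    have : (fun x' => deriv (fun x'' => a₂ / a t * x'') x') = fun _ => a₂ / a t :=
      funext fun x' => (hu1x x').deriv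
    rw [this, deriv_const]
  have hu1yy : deriv (fun y' => deriv (fun _ : ℝ => a₂ / a t * x) y') y = 0 := by
    simp
  have hu2xx : deriv (fun x' => deriv (fun _ : ℝ => a₂ / a t * y) x') x = 0 := by
    simp
  have hu2yy : deriv (fun y' => deriv (fun y'' => a₂ / a t * y'') y') y = 0 := by
    have h : ∀ y', HasDerivAt (fun y'' => a₂ / a t * y'') (a₂ / a t) y' := by
      intro y'; simpa using (hasDerivAt_id y').const_mul (a₂ / a t)
    have : (fun y' => deriv (fun y'' => a₂ / a t * y'') y') = fun _ => a₂ / a t :=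
      funext fun y' => (h y').deriv
    rw [this, deriv_const]
  -- second derivatives of φ
  have hφxx : deriv (fun x' => deriv (fun x'' => Φ ((A * x'' + B * y) / a t)) x') x
      = deriv (deriv Φ) s * (A / a t) * (A / a t) := by
    have h1 : (fun x' => deriv (fun x'' => Φ ((A * x'' + B * y) / a t)) x')
        = fun x' => deriv Φ ((A * x' + B * y) / a t) * (A / a t) :=
      funext fun x' => (hΦx x').deriv
    rw [h1]
    exact (((hΦ'd _).hasDerivAt.comp x (hsx x)).mul_const (A / a t)).deriv
  have hφyy : deriv (fun y' => deriv (fun y'' => Φ ((A * x + B * y'') / a t)) y') y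
      = deriv (deriv Φ) s * (B / a t) * (B / a t) := by
    have h1 : (fun y' => deriv (fun y'' => Φ ((A * x + B * y'') / a t)) y')
        = fun y' => deriv Φ ((A * x + B * y') / a t) * (B / a t) :=
      funext fun y' => (hΦy y').deriv
    rw [h1]
    exact (((hΦ'd _).hasDerivAt.comp y (hsy y)).mul_const (B / a t)).deriv
  refine ⟨?_, ?_, ?_, ?_⟩
  · rw [hρt.deriv, hρu1x.deriv, hρu2y.deriv]
    set E := Real.exp (-Φ s / K + C) with hE
    set P := deriv Φ s with hP
    push_cast
    field_simp
    ring
  · rw [hu1t.deriv, (hu1x x).deriv, hρx.deriv, (hΦx x).deriv, hu1xx, hu1yy]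
    rw [deriv_const]
    rw [← hs]
    field_simp
    ring
  · rw [hu2t.deriv, hρy.deriv, (hΦy y).deriv, hu2xx, hu2yy]
    rw [deriv_const, show (fun y' => a₂ / a t * y') = fun y' => a₂ / a t * y' from rfl]
    have : deriv (fun y' => a₂ / a t * y') y = a₂ / a t := by
      simpa using ((hasDerivAt_id y).const_mul (a₂ / a t)).deriv
    rw [this]
    rw [← hs]
    field_simp
    ring
  · rw [hφxx, hφyy, hODE s, Real.exp_add]
    field_simp
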